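/- If M is a matroid in which every circuit has size at least r(M) (i.e., M is a paving matroid), and C1, C2 are distinct circuits of size r(M) with a common element x such that |C1 ∪ C2| = r(M) + 1, then (C1 ∪ C2) - x is a circuit of M. -/

import Mathlib

open Set

variable {α : Type*}

/-- The rank of a set `X` in a matroid: size of a largest independent subset of `X`. -/
noncomputable def Matroid.rkSet (M : Matroid α) (X : Set α) : ℕ :=
  sSup {n | ∃ I, M.Indep I ∧ I ⊆ X ∧ I.ncard = n}

/-- The rank of a matroid. -/
noncomputable def Matroid.rank (M : Matroid α) : ℕ := M.rkSet M.E

/-- A circuit is a minimal dependent set. -/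
def Matroid.IsCircuit' (M : Matroid α) (C : Set α) : Prop :=
  M.Dep C ∧ ∀ D, D ⊂ C → M.Indep D

/-- A paving matroid: every circuit has size at least the rank. -/
def Matroid.Paving (M : Matroid α) : Prop :=
  ∀ C, M.IsCircuit' C → M.rank ≤ C.ncard

/-- Deletion of a set from a matroid. -/
noncomputable def Matroid.del (M : Matroid α) (D : Set α) : Matroid α :=
  M.restrict (M.E \ D)

/-- A cyclic ordering of a matroid, given as a list: every `M.rank`
cyclically-consecutive entries form a base. -/
def Matroid.IsCyclicOrdering (M : Matroid α) (l : List α) : Prop :=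
  l.Nodup ∧ {x | x ∈ l} = M.E ∧
    ∀ i : ℕ, M.IsBase {x | x ∈ (l.rotate i).take M.rank}

private lemma enc_eq {s : Set α} (hs : s.Finite) : s.encard = (s.ncard : ℕ∞) := by
  rw [hs.encard_eq_coe, Set.ncard_def]

/-- Every finite dependent set contains a circuit. -/
private lemma exists_circuit_subset (M : Matroid α) {S : Set α} (hS : M.Dep S)
    (hfin : S.Finite) : ∃ C ⊆ S, M.IsCircuit' C := by
  have hfam : {C | C ⊆ S ∧ M.Dep C}.Finite := by
    apply hfin.finite_subsets.subset
    intro C hC; exact hC.1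
  obtain ⟨C, hCmem, hCmin⟩ := Set.Finite.exists_minimalFor Set.ncard _ hfam ⟨S, Subset.rfl, hS⟩
  refine ⟨C, hCmem.1, hCmem.2, fun T hT => ?_⟩
  have hTE : T ⊆ M.E := hT.subset.trans hCmem.2.subset_ground
  by_contra hTi
  have hTd : M.Dep T := Matroid.dep_of_not_indep hTi hTE
  have hlt : T.ncard < C.ncard :=
    Set.ncard_lt_ncard hT (hfin.subset hCmem.1)
  have := hCmin ⟨hT.subset.trans hCmem.1, hTd⟩ hlt.le
  omega


/-- Circuit elimination in a paving matroid applied to two rank-size circuits whose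
union has size `r(M) + 1`. -/
theorem stmt1 (M : Matroid α) (hpav : M.Paving) (C1 C2 : Set α) (x : α)
    (h1 : M.IsCircuit' C1) (h2 : M.IsCircuit' C2) (hne : C1 ≠ C2)
    (hc1 : C1.ncard = M.rank) (hc2 : C2.ncard = M.rank)
    (hx : x ∈ C1 ∩ C2) (hu : (C1 ∪ C2).ncard = M.rank + 1) :
    M.IsCircuit' ((C1 ∪ C2) \ {x}) := by
  set r := M.rank with hr
  set U := C1 ∪ C2 with hU
  have hUfin : U.Finite := by
    by_contra h
    rw [Set.Infinite.ncard (by rwa [← Set.not_infinite, not_not] at h)] at hu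
    omega
  have h1fin : C1.Finite := hUfin.subset subset_union_left
  have h2fin : C2.Finite := hUfin.subset subset_union_right
  have hUE : U ⊆ M.E := union_subset h1.1.subset_ground h2.1.subset_ground
  have hxU : x ∈ U := Or.inl hx.1
  set D := U \ {x} with hD
  have hDfin : D.Finite := hUfin.subset diff_subset
  have hDcard : D.ncard = r := by
    rw [hD, Set.ncard_diff_singleton_of_mem hxU, hu]
    omega
  have hDE : D ⊆ M.E := diff_subset.trans hUE
  have hrpos : 1 ≤ r := by
    have := h1.1.nonempty
    rw [← hc1]
    exact (Set.ncard_pos h1fin).mpr this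
  -- y ∈ C1 \ C2
  obtain ⟨y, hy⟩ : (C1 \ C2).Nonempty := by
    rw [Set.nonempty_iff_ne_empty]
    intro h
    have hsub : C1 ⊆ C2 := diff_eq_empty.mp h
    rcases hsub.eq_or_ssubset with h' | h'
    · exact hne h'
    · exact h1.1.not_indep (h2.2 _ h')
  -- D is dependent
  have hDdep : M.Dep D := by
    refine Matroid.dep_of_not_indep ?_ hDE
    intro hDi
    have hI0 : M.Indep (C1 \ {y}) := h1.2 _ (Set.sdiff_singleton_ssubset.mpr hy.1)
    obtain ⟨J, hJ, hIJ⟩ := hI0.subset_isBasis_of_subset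
      ((diff_subset).trans subset_union_left) hUE
    have hyJ : y ∉ J := by
      intro hyJ
      have : C1 ⊆ J := by
        intro a ha
        rcases eq_or_ne a y with rfl | hay
        · exact hyJ
        · exact hIJ ⟨ha, hay⟩
      exact h1.1.not_indep (hJ.indep.subset this)
    obtain ⟨z, hzC2, hzJ⟩ : ∃ z ∈ C2, z ∉ J := by
      by_contra h
      push_neg at h
      exact h2.1.not_indep (hJ.indep.subset h)
    have hzy : z ≠ y := fun h => hy.2 (h ▸ hzC2)
    have hJsub : J ⊆ U \ {y, z} := by
      intro a ha
      refine ⟨hJ.subset ha, ?_⟩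
      rintro (rfl | rfl)
      · exact hyJ ha
      · exact hzJ ha
    have hcard2 : ({y, z} : Set α).ncard = 2 := Set.ncard_pair hzy.symm
    have hyzU : ({y, z} : Set α) ⊆ U := by
      rintro a (rfl | rfl)
      · exact Or.inl hy.1
      · exact Or.inr hzC2
    have hJcard : J.ncard ≤ r - 1 := by
      have := Set.ncard_le_ncard hJsub (hUfin.subset diff_subset)
      rw [Set.ncard_diff hyzU (Set.toFinite _), hcard2, hu] at this
      omega
    have hlt : J.encard < D.encard := by
      rw [enc_eq (hUfin.subset hJ.subset), enc_eq hDfin, hDcard]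
      exact_mod_cast lt_of_le_of_lt hJcard (by omega)
    obtain ⟨e, he, hins⟩ := hJ.indep.augment hDi hlt
    have : J = insert e J :=
      hJ.eq_of_subset_indep hins (subset_insert _ _)
        (insert_subset (diff_subset he.1) hJ.subset)
    exact he.2 (this ▸ mem_insert e J)
  refine ⟨hDdep, fun S hS => ?_⟩
  have hSE : S ⊆ M.E := hS.subset.trans hDE
  by_contra hSi
  have hSd : M.Dep S := Matroid.dep_of_not_indep hSi hSE
  obtain ⟨C, hCS, hC⟩ := exists_circuit_subset M hSd (hDfin.subset hS.subset)
  have h1' := hpav C hC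
  have h2' : C.ncard ≤ S.ncard := Set.ncard_le_ncard hCS (hDfin.subset hS.subset)
  have h3' : S.ncard < D.ncard := Set.ncard_lt_ncard hS hDfin
  omega
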